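/- arXiv:1311.5394 — 8 statements merged into one kernel-verified Lean document; each statement's English description precedes it below -/
import Mathlib

section
/- Let g be C^2 on an interval I = [a,b] with min over I of max{|g'(θ)|, g''(θ)} ≥ D > 0, and let 0 < δ ≤ D/4. If g is strictly increasing on I with g(I) = [-δ, δ], then |I| ≤ 2√(δ/D). -/
/-- If `g` is `C²` on `I = [a,b]`, `max{|g'|, g''} ≥ D` on `I`, `0 < δ ≤ D/4`,
`g' > 0` on `I`, and `g(I) = [-δ, δ]`, then `|I| ≤ 2 √(δ/D)`. -/
theorem stmt3 (a b : ℝ) (g : ℝ → ℝ) (D δ : ℝ)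
    (hab : a ≤ b) (hg : ContDiff ℝ 2 g)
    (hD : 0 < D) (hδ : 0 < δ) (hδD : δ ≤ D / 4)
    (hmax : ∀ θ ∈ Set.Icc a b, D ≤ max |deriv g θ| (deriv (deriv g) θ))
    (hpos : ∀ θ ∈ Set.Icc a b, 0 < deriv g θ)
    (hga : g a = -δ) (hgb : g b = δ)
    (himg : g '' Set.Icc a b = Set.Icc (-δ) δ) :
    b - a ≤ 2 * Real.sqrt (δ / D) := by
  -- basic differentiability facts
  have hdg : Differentiable ℝ g := hg.differentiable (by norm_num)
  have hg1 : ContDiff ℝ 1 (deriv g) := by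
    have := (contDiff_succ_iff_deriv (n := 1)).mp (by exact_mod_cast hg)
    exact this.2.2
  have hdg' : Differentiable ℝ (deriv g) := hg1.differentiable (by norm_num)
  have hcg' : Continuous (deriv g) := hdg'.continuous
  -- whenever g' < D on [a,b], g'' ≥ D
  have hsec : ∀ θ ∈ Set.Icc a b, deriv g θ < D → D ≤ deriv (deriv g) θ := by
    intro θ hθ hlt
    rcases le_max_iff.mp (hmax θ hθ) with h | h
    · rw [abs_of_pos (hpos θ hθ)] at h; linarith
    · exact h
  -- define c = first point where g' ≥ D (or b)
  set T : Set ℝ := {b} ∪ {θ ∈ Set.Icc a b | D ≤ deriv g θ} with hT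
  have hTclosed : IsClosed T :=
    isClosed_singleton.union ((isClosed_Icc.inter (isClosed_le continuous_const hcg')))
  have hTcompact : IsCompact T :=
    isCompact_singleton.union
      (isCompact_Icc.inter_right (isClosed_le continuous_const hcg'))
  have hTne : T.Nonempty := ⟨b, Or.inl rfl⟩
  set c : ℝ := sInf T with hc
  have hcT : c ∈ T := hTcompact.sInf_mem hTne
  have hcb : c ≤ b := csInf_le hTcompact.bddBelow (Or.inl rfl)
  have hac : a ≤ c := by
    rcases hcT with h | h
    · exact le_of_le_of_eq hab (Set.mem_singleton_iff.mp h).symm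
    · exact h.1.1
  have hcI : c ∈ Set.Icc a b := ⟨hac, hcb⟩
  -- below c, g' < D, whence g'' ≥ D
  have hbelow : ∀ θ, a ≤ θ → θ < c → deriv g θ < D := by
    intro θ haθ hθc
    by_contra h
    push_neg at h
    have : θ ∈ T := Or.inr ⟨⟨haθ, hθc.le.trans hcb⟩, h⟩
    exact absurd (csInf_le hTcompact.bddBelow this) (not_le.mpr hθc)
  -- above c, g' ≥ D
  have habove : ∀ u ∈ Set.Ioo c b, D ≤ deriv g u := by
    intro u hu
    by_contra h
    push_neg at h
    have hcb' : c < b := hu.1.trans hu.2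
    have hgc : D ≤ deriv g c := by
      rcases hcT with hh | hh
      · exact absurd (Set.mem_singleton_iff.mp hh) (ne_of_lt hcb')
      · exact hh.2
    set T2 : Set ℝ := Set.Icc c u ∩ {θ | D ≤ deriv g θ} with hT2
    have hT2c : IsCompact T2 :=
      isCompact_Icc.inter_right (isClosed_le continuous_const hcg')
    have hT2ne : T2.Nonempty := ⟨c, ⟨le_rfl, hu.1.le⟩, hgc⟩
    set v : ℝ := sSup T2 with hv
    have hvT2 : v ∈ T2 := hT2c.sSup_mem hT2ne
    have hvu : v < u := lt_of_le_of_ne hvT2.1.2 (fun h' => absurd (h' ▸ hvT2.2) (not_le.mpr h))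
    -- on (v,u), g' < D so g'' ≥ D
    have hmid : ∀ θ ∈ interior (Set.Icc v u), D ≤ deriv (deriv g) θ := by
      intro θ hθ
      rw [interior_Icc] at hθ
      have hθI : θ ∈ Set.Icc a b :=
        ⟨hac.trans (hvT2.1.1.trans hθ.1.le), (hθ.2.le.trans hu.2.le)⟩
      refine hsec θ hθI ?_
      by_contra h2
      push_neg at h2
      have : θ ∈ T2 := ⟨⟨hvT2.1.1.trans hθ.1.le, hθ.2.le⟩, h2⟩
      exact absurd (le_csSup hT2c.bddAbove this) (not_le.mpr hθ.1)
    have := (convex_Icc v u).mul_sub_le_image_sub_of_le_deriv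
      (hcg'.continuousOn) (hdg'.differentiableOn) hmid v ⟨le_rfl, hvu.le⟩
      u ⟨hvu.le, le_rfl⟩ hvu.le
    have h3 : D * (u - v) ≤ deriv g u - deriv g v := this
    have h4 : 0 < D * (u - v) := mul_pos hD (sub_pos.mpr hvu)
    have h5 : D ≤ deriv g v := hvT2.2
    linarith
  -- g'' ≥ D on interior of [a,c]
  have hsecac : ∀ θ ∈ interior (Set.Icc a c), D ≤ deriv (deriv g) θ := by
    intro θ hθ
    rw [interior_Icc] at hθ
    exact hsec θ ⟨hθ.1.le, hθ.2.le.trans hcb⟩ (hbelow θ hθ.1.le hθ.2)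
  -- hence g'(θ) ≥ D (θ - a) on [a,c]
  have hglb : ∀ θ ∈ Set.Icc a c, D * (θ - a) ≤ deriv g θ := by
    intro θ hθ
    have := (convex_Icc a c).mul_sub_le_image_sub_of_le_deriv
      (hcg'.continuousOn) (hdg'.differentiableOn) hsecac a ⟨le_rfl, hac⟩ θ hθ hθ.1
    have hga' : 0 < deriv g a := hpos a ⟨le_rfl, hab⟩
    linarith
  -- hence g(c) - g(a) ≥ D (c-a)^2 / 2, via monotonicity of φ = g - D(·-a)²/2
  have hquad : D * (c - a) ^ 2 / 2 ≤ g c - g a := by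
    have hdφ : ∀ θ, HasDerivAt (fun θ => g θ - D / 2 * (θ - a) ^ 2)
        (deriv g θ - D * (θ - a)) θ := by
      intro θ
      have h1 : HasDerivAt (fun θ : ℝ => D / 2 * (θ - a) ^ 2)
          (D / 2 * (2 * (θ - a) ^ 1 * 1)) θ :=
        (((hasDerivAt_id θ).sub_const a).pow 2).const_mul (D / 2)
      have : HasDerivAt (fun θ => g θ - D / 2 * (θ - a) ^ 2)
          (deriv g θ - D / 2 * (2 * (θ - a) ^ 1 * 1)) θ := (hdg θ).hasDerivAt.sub h1
      convert this using 1
      ring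
    have hcont : Continuous (fun θ => g θ - D / 2 * (θ - a) ^ 2) :=
      hdg.continuous.sub (continuous_const.mul ((continuous_id.sub continuous_const).pow 2))
    have hmono : MonotoneOn (fun θ => g θ - D / 2 * (θ - a) ^ 2) (Set.Icc a c) := by
      refine monotoneOn_of_deriv_nonneg (convex_Icc a c) hcont.continuousOn
        (fun θ _ => (hdφ θ).differentiableAt.differentiableWithinAt) (fun θ hθ => ?_)
      rw [interior_Icc] at hθ
      rw [(hdφ θ).deriv]
      linarith [hglb θ ⟨hθ.1.le, hθ.2.le⟩]
    have h2 := hmono (Set.left_mem_Icc.mpr hac) (Set.right_mem_Icc.mpr hac) hac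
    simp only at h2
    nlinarith [h2]
  -- g(b) - g(c) ≥ D (b - c)
  have hlin : D * (b - c) ≤ g b - g c := by
    have : ∀ θ ∈ interior (Set.Icc c b), D ≤ deriv g θ := by
      intro θ hθ; rw [interior_Icc] at hθ; exact habove θ hθ
    exact (convex_Icc c b).mul_sub_le_image_sub_of_le_deriv
      (hdg.continuous.continuousOn) (hdg.differentiableOn) this
      c ⟨le_rfl, hcb⟩ b ⟨hcb, le_rfl⟩ hcb
  -- g(c) ∈ [-δ, δ]
  have hgcI : g c ∈ Set.Icc (-δ) δ := by
    rw [← himg]; exact Set.mem_image_of_mem g hcI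
  -- final arithmetic
  set r : ℝ := Real.sqrt (δ / D) with hr
  have hr2 : r ^ 2 = δ / D := Real.sq_sqrt (by positivity)
  have hrnn : 0 ≤ r := Real.sqrt_nonneg _
  have hrle : r ≤ 1 / 2 := by
    rw [show (1:ℝ)/2 = Real.sqrt (1/4) by
      rw [show (1:ℝ)/4 = (1/2)^2 by norm_num, Real.sqrt_sq (by norm_num)]]
    exact Real.sqrt_le_sqrt (by rw [div_le_div_iff₀ hD (by norm_num)]; linarith)
  rw [hga] at hquad
  rw [hgb] at hlin
  have hδeq : D * r ^ 2 = δ := by rw [hr2]; field_simp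
  have h4 : (c - a) ^ 2 ≤ (2 * r) ^ 2 := by nlinarith [hgcI.2, hquad]
  have hsle : c - a ≤ 2 * r := by
    nlinarith [h4, sub_nonneg.mpr hac, hrnn]
  have hsum : D * (c - a) ^ 2 / 2 + D * (b - c) ≤ 2 * δ := by linarith
  have hprod : 0 ≤ D * ((2 * r - (c - a)) * (2 - 2 * r - (c - a))) :=
    mul_nonneg hD.le (mul_nonneg (by linarith) (by linarith))
  nlinarith [hsum, hδeq, hprod, sub_nonneg.mpr hcb, hD]
end

section
/- Let g be C^2 on an interval I with min over I of max{|g'(θ)|, g''(θ)} ≥ D > 0, 0 < δ ≤ D/4, g' > 0 on I, and g(I) = [-δ,δ]. Then on the subinterval I' = {θ ∈ I : |g(θ)| ≤ (3/4)δ} one has g'(θ) ≥ √(δD/2). -/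
/-- If `g` is `C²` on `I`, `max{|g'|, g''} ≥ D` on `I`, `0 < δ ≤ D/4`, `g' > 0` on `I`,
and `g(I) = [-δ, δ]`, then on `I' = {θ ∈ I : |g θ| ≤ (3/4)δ}` one has
`g'(θ) ≥ √(δ D / 2)`. -/
theorem stmt4 (a b : ℝ) (g : ℝ → ℝ) (D δ : ℝ)
    (hab : a ≤ b) (hg : ContDiff ℝ 2 g)
    (hD : 0 < D) (hδ : 0 < δ) (hδD : δ ≤ D / 4)
    (hmax : ∀ θ ∈ Set.Icc a b, D ≤ max |deriv g θ| (deriv (deriv g) θ))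
    (hpos : ∀ θ ∈ Set.Icc a b, 0 < deriv g θ)
    (himg : g '' Set.Icc a b = Set.Icc (-δ) δ) :
    ∀ θ ∈ Set.Icc a b, |g θ| ≤ (3/4) * δ →
      Real.sqrt (δ * D / 2) ≤ deriv g θ := by
  -- regularity facts
  have h2 : ContDiff ℝ (1+1 : ℕ) g := by exact_mod_cast hg
  have hg1 : ContDiff ℝ 1 (deriv g) := (contDiff_succ_iff_deriv.mp h2).2.2
  have hgd : Differentiable ℝ g := hg.differentiable (by norm_num)
  have hg'd : Differentiable ℝ (deriv g) := hg1.differentiable one_ne_zero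
  have hg'c : Continuous (deriv g) := hg'd.continuous
  intro θ₀ hθ₀ habs
  by_contra hcon
  push_neg at hcon
  set v := deriv g θ₀ with hv
  have hvpos : 0 < v := hpos θ₀ hθ₀
  -- v < D
  have hsqle : Real.sqrt (δ * D / 2) ≤ D := by
    have : δ * D / 2 ≤ D ^ 2 := by nlinarith
    calc Real.sqrt (δ * D / 2) ≤ Real.sqrt (D ^ 2) := Real.sqrt_le_sqrt this
    _ = D := by rw [Real.sqrt_sq hD.le]
  have hvD : v < D := lt_of_lt_of_le hcon hsqle
  -- g a = -δ
  have hmono : MonotoneOn g (Set.Icc a b) := by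
    apply monotoneOn_of_deriv_nonneg (convex_Icc a b) hgd.continuous.continuousOn
      (fun x _ => (hgd x).differentiableWithinAt)
    intro x hx
    exact (hpos x (interior_subset hx)).le
  have hga : g a = -δ := by
    have hmem : -δ ∈ g '' Set.Icc a b := by rw [himg]; exact ⟨le_rfl, by linarith⟩
    obtain ⟨c, hc, hgc⟩ := hmem
    have h1 : g a ≤ -δ := hgc ▸ hmono (Set.left_mem_Icc.2 hab) hc hc.1
    have h2 : g a ∈ Set.Icc (-δ) δ := by
      rw [← himg]; exact ⟨a, Set.left_mem_Icc.2 hab, rfl⟩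
    exact le_antisymm h1 h2.1
  have haθ : a ≤ θ₀ := hθ₀.1
  -- g' < D on [a, θ₀]
  have hltD : ∀ s ∈ Set.Icc a θ₀, deriv g s < D := by
    by_contra hS
    push_neg at hS
    obtain ⟨s₀, hs₀, hs₀D⟩ := hS
    set S := Set.Icc a θ₀ ∩ {s | D ≤ deriv g s} with hSdef
    have hScpt : IsCompact S :=
      isCompact_Icc.inter_right (isClosed_le continuous_const hg'c)
    have hSne : S.Nonempty := ⟨s₀, hs₀, hs₀D⟩
    obtain ⟨c, hcS, hcmax⟩ := hScpt.exists_isGreatest hSne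
    have hcθ : c < θ₀ := lt_of_le_of_ne hcS.1.2 (by
      rintro rfl; exact absurd hcS.2 (not_le.2 hvD))
    have hsub : Set.Icc c θ₀ ⊆ Set.Icc a b :=
      Set.Icc_subset_Icc hcS.1.1 hθ₀.2
    -- on (c, θ₀), g'' ≥ D
    have hdd : ∀ s ∈ Set.Ioo c θ₀, D ≤ deriv (deriv g) s := by
      intro s hs
      have hsab : s ∈ Set.Icc a b := hsub ⟨hs.1.le, hs.2.le⟩
      have hnot : ¬ D ≤ deriv g s := by
        intro h
        have : s ∈ S := ⟨⟨le_trans hcS.1.1 hs.1.le, hs.2.le⟩, h⟩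
        exact absurd (hcmax this) (not_le.2 hs.1)
      rcases le_max_iff.mp (hmax s hsab) with h | h
      · rw [abs_of_pos (hpos s hsab)] at h; exact absurd h hnot
      · exact h
    have hsm : StrictMonoOn (deriv g) (Set.Icc c θ₀) := by
      apply strictMonoOn_of_deriv_pos (convex_Icc c θ₀) hg'c.continuousOn
      intro x hx
      rw [interior_Icc] at hx
      exact lt_of_lt_of_le hD (hdd x hx)
    have : deriv g c < v := hsm (Set.left_mem_Icc.2 hcθ.le)
      (Set.right_mem_Icc.2 hcθ.le) hcθ
    exact absurd hcS.2 (not_le.2 (lt_trans this hvD))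
  -- hence g'' ≥ D on [a, θ₀]
  have hdd : ∀ s ∈ Set.Icc a θ₀, D ≤ deriv (deriv g) s := by
    intro s hs
    have hsab : s ∈ Set.Icc a b := ⟨hs.1, le_trans hs.2 hθ₀.2⟩
    rcases le_max_iff.mp (hmax s hsab) with h | h
    · rw [abs_of_pos (hpos s hsab)] at h
      exact absurd h (not_le.2 (hltD s hs))
    · exact h
  -- g'(s) ≤ v - D (θ₀ - s) on [a, θ₀]
  have hlin : ∀ s ∈ Set.Icc a θ₀, deriv g s ≤ v - D * (θ₀ - s) := by
    have hψd : ∀ x : ℝ, HasDerivAt (fun s => deriv g s - D * s)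
        (deriv (deriv g) x - D) x := by
      intro x
      have h1 : HasDerivAt (fun s : ℝ => D * s) D x := by
        simpa using (hasDerivAt_id x).const_mul D
      exact (hg'd x).hasDerivAt.sub h1
    have hm : MonotoneOn (fun s => deriv g s - D * s) (Set.Icc a θ₀) := by
      apply monotoneOn_of_deriv_nonneg (convex_Icc a θ₀)
        (fun x _ => (hψd x).continuousAt.continuousWithinAt)
        (fun x _ => (hψd x).differentiableAt.differentiableWithinAt)
      intro x hx
      rw [interior_Icc] at hx
      rw [(hψd x).deriv]
      linarith [hdd x ⟨hx.1.le, hx.2.le⟩]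
    intro s hs
    have := hm hs (Set.right_mem_Icc.2 haθ) hs.2
    simp only at this
    nlinarith [this]
  -- θ₀ - a < v / D  (from g'(a) > 0)
  have hta : D * (θ₀ - a) < v := by
    have h1 := hlin a (Set.left_mem_Icc.2 haθ)
    have h2 := hpos a (Set.left_mem_Icc.2 hab)
    linarith
  -- g θ₀ ≤ g a + v (θ₀ - a) - D (θ₀ - a)^2 / 2
  have hkey : g θ₀ ≤ g a + v * (θ₀ - a) - D * (θ₀ - a) ^ 2 / 2 := by
    set φ : ℝ → ℝ := fun s => v * s + D * ((θ₀ - s) ^ 2 / 2) - g s with hφ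
    have hφd : ∀ x : ℝ, HasDerivAt φ (v - D * (θ₀ - x) - deriv g x) x := by
      intro x
      have h1 : HasDerivAt (fun s : ℝ => v * s) v x := by
        simpa using (hasDerivAt_id x).const_mul v
      have h2 : HasDerivAt (fun s : ℝ => (θ₀ - s) ^ 2 / 2) (-(θ₀ - x)) x := by
        have ha : HasDerivAt (fun s : ℝ => θ₀ - s) (-1) x := by
          simpa using (hasDerivAt_id x).const_sub θ₀
        have := (ha.pow 2).div_const 2
        exact this.congr_deriv (by ring)
      have h3 : HasDerivAt (fun s : ℝ => D * ((θ₀ - s) ^ 2 / 2)) (D * (-(θ₀ - x))) x :=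
        h2.const_mul D
      have := (h1.add h3).sub (hgd x).hasDerivAt
      exact this.congr_deriv (by ring)
    have hm : MonotoneOn φ (Set.Icc a θ₀) := by
      apply monotoneOn_of_deriv_nonneg (convex_Icc a θ₀)
        (fun x _ => (hφd x).continuousAt.continuousWithinAt)
        (fun x _ => (hφd x).differentiableAt.differentiableWithinAt)
      intro x hx
      rw [interior_Icc] at hx
      rw [(hφd x).deriv]
      have := hlin x ⟨hx.1.le, hx.2.le⟩
      linarith
    have := hm (Set.left_mem_Icc.2 haθ) (Set.right_mem_Icc.2 haθ) haθ
    simp only [hφ] at this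
    nlinarith [this]
  -- conclude
  have hv2 : v ^ 2 < δ * D / 2 := by
    have := Real.sq_sqrt (by positivity : (0:ℝ) ≤ δ * D / 2)
    nlinarith [hcon, Real.sqrt_nonneg (δ * D / 2)]
  have hglb : -(3/4 * δ) ≤ g θ₀ := (abs_le.mp habs).1 |>.trans_eq' (by ring_nf)
  nlinarith [sq_nonneg (v - D * (θ₀ - a)), hkey, hglb, hga, hv2, hD, mul_pos hD hvpos]
end

section
/- Let g be C^2 on an interval I with max{|g'(θ)|, g''(θ)} ≥ D > 0 for all θ ∈ I, and 0 < δ ≤ D/4. If g(I) ⊆ [-δ, δ], then |I| ≤ 4√(δ/D). -/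
open Set

/-- Once `f ≥ D`, it stays `≥ D` to the right. -/
lemma persist_right (f : ℝ → ℝ) (a b D : ℝ) (hD : 0 < D)
    (hf : Differentiable ℝ f)
    (hmax : ∀ θ ∈ Set.Icc a b, D ≤ max |f θ| (deriv f θ))
    {x y : ℝ} (hx : x ∈ Set.Icc a b) (hy : y ∈ Set.Icc a b) (hxy : x ≤ y)
    (hfx : D ≤ f x) : D ≤ f y := by
  by_contra hcon
  push_neg at hcon
  set S : Set ℝ := Set.Icc x y ∩ f ⁻¹' Set.Ici D with hS
  have hSne : S.Nonempty := ⟨x, ⟨le_refl x, hxy⟩, hfx⟩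
  have hSclosed : IsClosed S := isClosed_Icc.inter (isClosed_Ici.preimage hf.continuous)
  have hSbdd : BddAbove S := ⟨y, fun s hs => hs.1.2⟩
  set c := sSup S with hc
  have hcS : c ∈ S := hSclosed.csSup_mem hSne hSbdd
  have hfc : D ≤ f c := hcS.2
  have hcy : c < y := lt_of_le_of_ne hcS.1.2 (by intro h; rw [h] at hfc; linarith)
  have hxc : x ≤ c := hcS.1.1
  have key : ∃ d, c < d ∧ d ≤ y ∧ (∀ s ∈ Set.Ioo c d, -D < f s) ∧ f d < D := by
    set T : Set ℝ := Set.Icc c y ∩ f ⁻¹' Set.Iic (-D) with hT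
    by_cases hTne : T.Nonempty
    · have hTclosed : IsClosed T := isClosed_Icc.inter (isClosed_Iic.preimage hf.continuous)
      have hTbdd : BddBelow T := ⟨c, fun s hs => hs.1.1⟩
      set d := sInf T with hd
      have hdT : d ∈ T := hTclosed.csInf_mem hTne hTbdd
      have hfd : f d ≤ -D := hdT.2
      have hcd : c < d := lt_of_le_of_ne hdT.1.1 (by intro h; rw [← h] at hfd; linarith)
      refine ⟨d, hcd, hdT.1.2, fun s hs => ?_, by linarith⟩
      by_contra hcon2
      push_neg at hcon2
      have : d ≤ s := csInf_le hTbdd ⟨⟨le_of_lt hs.1, le_trans (le_of_lt hs.2) hdT.1.2⟩, hcon2⟩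
      exact absurd hs.2 (not_lt.mpr this)
    · refine ⟨y, hcy, le_refl y, fun s hs => ?_, hcon⟩
      by_contra hcon2
      push_neg at hcon2
      exact hTne ⟨s, ⟨le_of_lt hs.1, le_of_lt hs.2⟩, hcon2⟩
  obtain ⟨d, hcd, hdy, hlow, hfd⟩ := key
  have hsub : Set.Icc c d ⊆ Set.Icc a b := fun s hs =>
    ⟨le_trans hx.1 (le_trans hxc hs.1), le_trans hs.2 (le_trans hdy hy.2)⟩
  have hderiv : ∀ s ∈ Set.Ioo c d, 0 < deriv f s := by
    intro s hs
    have hsD : f s < D := by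
      by_contra hcon2
      push_neg at hcon2
      have : s ≤ c := le_csSup hSbdd
        ⟨⟨le_trans hxc (le_of_lt hs.1), le_trans (le_of_lt hs.2) hdy⟩, hcon2⟩
      exact absurd hs.1 (not_lt.mpr this)
    have habs : |f s| < D := abs_lt.mpr ⟨hlow s hs, hsD⟩
    rcases le_max_iff.mp (hmax s (hsub ⟨le_of_lt hs.1, le_of_lt hs.2⟩)) with h | h
    · exact absurd h (not_le.mpr habs)
    · linarith
  have hmono : StrictMonoOn f (Set.Icc c d) :=
    strictMonoOn_of_deriv_pos (convex_Icc c d) hf.continuous.continuousOn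
      (fun s hs => hderiv s (by rwa [interior_Icc] at hs))
  have := hmono ⟨le_refl c, le_of_lt hcd⟩ ⟨le_of_lt hcd, le_refl d⟩ hcd
  linarith

/-- Mirror: once `f ≤ -D`, it was `≤ -D` to the left. -/
lemma persist_left (f : ℝ → ℝ) (a b D : ℝ) (hD : 0 < D)
    (hf : Differentiable ℝ f)
    (hmax : ∀ θ ∈ Set.Icc a b, D ≤ max |f θ| (deriv f θ))
    {x y : ℝ} (hx : x ∈ Set.Icc a b) (hy : y ∈ Set.Icc a b) (hxy : x ≤ y)
    (hfy : f y ≤ -D) : f x ≤ -D := by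
  set F : ℝ → ℝ := fun s => -f (-s) with hF
  have hdF : deriv F = fun s => deriv f (-s) := by
    funext s
    rw [hF]
    rw [show (fun s => -f (-s)) = (fun s : ℝ => -((fun u => f (-u)) s)) from rfl,
      deriv.fun_neg, deriv_comp_neg, neg_neg]
  have hFd : Differentiable ℝ F := ((hf.comp differentiable_neg)).neg
  have hmax' : ∀ θ ∈ Set.Icc (-b) (-a), D ≤ max |F θ| (deriv F θ) := by
    intro θ hθ
    have hm : -θ ∈ Set.Icc a b := ⟨by linarith [hθ.2], by linarith [hθ.1]⟩
    have h := hmax (-θ) hm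
    rw [hdF]
    simpa [hF, abs_neg] using h
  have := persist_right F (-b) (-a) D hD hFd hmax'
    (x := -y) (y := -x) ⟨by linarith [hy.2], by linarith [hy.1]⟩
    ⟨by linarith [hx.2], by linarith [hx.1]⟩ (by linarith)
    (by simp only [hF, neg_neg]; linarith)
  simp only [hF, neg_neg] at this
  linarith

/-- One-sided bound: if `g'(ξ) ≥ 0` then `b - ξ ≤ 2√(δ/D)`. -/
lemma right_bound (a b : ℝ) (g : ℝ → ℝ) (D δ : ℝ)
    (hg : ContDiff ℝ 2 g)
    (hD : 0 < D) (hδ : 0 < δ) (hδD : δ ≤ D / 4)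
    (hmax : ∀ θ ∈ Set.Icc a b, D ≤ max |deriv g θ| (deriv (deriv g) θ))
    (hsmall : ∀ θ ∈ Set.Icc a b, |g θ| ≤ δ)
    {ξ : ℝ} (hξ : ξ ∈ Set.Icc a b) (h0 : 0 ≤ deriv g ξ) :
    b - ξ ≤ 2 * Real.sqrt (δ / D) := by
  have hgd : Differentiable ℝ g := hg.differentiable (by norm_num)
  have hdg : Differentiable ℝ (deriv g) := by
    have h2 : ContDiff ℝ ((1:WithTop ℕ∞) + 1) g := by exact_mod_cast hg
    exact ((contDiff_succ_iff_deriv.mp h2).2.2).differentiable one_ne_zero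
  set t := Real.sqrt (δ / D) with htdef
  have htpos : 0 < t := Real.sqrt_pos.mpr (by positivity)
  have ht2 : t ^ 2 = δ / D := Real.sq_sqrt (by positivity)
  have h2t1 : 2 * t ≤ 1 := by
    have hq : δ / D ≤ 1 / 4 := by rw [div_le_iff₀ hD]; linarith
    nlinarith [ht2, htpos, hq]
  by_contra hcon
  push_neg at hcon
  set η := ξ + 2 * t with hη
  have hηb : η < b := by rw [hη]; linarith
  have hηab : η ∈ Set.Icc a b := ⟨by have := hξ.1; rw [hη]; nlinarith, le_of_lt hηb⟩
  -- step 1 : pointwise lower bound on deriv g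
  have step1 : ∀ θ ∈ Set.Icc ξ b, min (D * (θ - ξ)) (2 * t * D) ≤ deriv g θ := by
    intro θ hθ
    have hθab : θ ∈ Set.Icc a b := ⟨le_trans hξ.1 hθ.1, hθ.2⟩
    by_cases hc : D ≤ deriv g θ
    · calc min (D * (θ - ξ)) (2 * t * D) ≤ 2 * t * D := min_le_right _ _
        _ ≤ 1 * D := by nlinarith
        _ ≤ deriv g θ := by linarith
    push_neg at hc
    have hsub : Set.Icc ξ θ ⊆ Set.Icc a b := fun s hs =>
      ⟨le_trans hξ.1 hs.1, le_trans hs.2 hθ.2⟩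
    have habs : ∀ s ∈ Set.Icc ξ θ, D ≤ deriv (deriv g) s := by
      intro s hs
      have hsab := hsub hs
      have h1 : deriv g s < D := by
        by_contra hcon2
        push_neg at hcon2
        have := persist_right (deriv g) a b D hD hdg hmax hsab hθab hs.2 hcon2
        linarith
      have h2 : -D < deriv g s := by
        by_contra hcon2
        push_neg at hcon2
        have := persist_left (deriv g) a b D hD hdg hmax hξ hsab hs.1 hcon2
        linarith
      rcases le_max_iff.mp (hmax s hsab) with h | h
      · exact absurd h (not_le.mpr (abs_lt.mpr ⟨h2, h1⟩))
      · exact h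
    set ψ : ℝ → ℝ := fun s => deriv g s - D * s with hψ
    have hψd : ∀ s, HasDerivAt ψ (deriv (deriv g) s - D) s := by
      intro s
      exact (((hdg s).hasDerivAt).sub ((hasDerivAt_id s).const_mul D)).congr_deriv (by ring)
    have hψc : Continuous ψ := by
      rw [hψ]; exact hdg.continuous.sub (continuous_const.mul continuous_id')
    have hψmono : MonotoneOn ψ (Set.Icc ξ θ) := by
      refine monotoneOn_of_deriv_nonneg (convex_Icc ξ θ) hψc.continuousOn
        (fun s _ => ((hψd s).differentiableAt).differentiableWithinAt) (fun s hs => ?_)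
      rw [interior_Icc] at hs
      rw [(hψd s).deriv]
      have := habs s ⟨le_of_lt hs.1, le_of_lt hs.2⟩
      linarith
    have := hψmono ⟨le_refl ξ, hθ.1⟩ ⟨hθ.1, le_refl θ⟩ hθ.1
    simp only [hψ] at this
    have hmin : min (D * (θ - ξ)) (2 * t * D) ≤ D * (θ - ξ) := min_le_left _ _
    nlinarith
  -- step 2 : g η ≥ g ξ + 2δ
  have step2 : g ξ + 2 * δ ≤ g η := by
    set φ : ℝ → ℝ := fun s => g s - D / 2 * (s - ξ) ^ 2 with hφ
    have hφd : ∀ s, HasDerivAt φ (deriv g s - D * (s - ξ)) s := by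
      intro s
      have h1 : HasDerivAt (fun s : ℝ => D / 2 * (s - ξ) ^ 2) (D * (s - ξ)) s := by
        have := (((hasDerivAt_id s).sub_const ξ).pow 2).const_mul (D / 2)
        exact this.congr_deriv (by simp [id_eq]; ring)
      exact ((hgd s).hasDerivAt).sub h1
    have hφmono : MonotoneOn φ (Set.Icc ξ η) := by
      apply monotoneOn_of_deriv_nonneg (convex_Icc ξ η)
        (Continuous.continuousOn (by fun_prop))
        (fun s _ => ((hφd s).differentiableAt).differentiableWithinAt)
      intro s hs
      rw [interior_Icc] at hs
      rw [(hφd s).deriv]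
      have hs2 : s < ξ + 2 * t := by have := hs.2; rw [hη] at this; exact this
      have h1 := step1 s ⟨le_of_lt hs.1, le_of_lt (lt_of_lt_of_le hs.2 (le_of_lt hηb))⟩
      have h2 : D * (s - ξ) ≤ 2 * t * D := by nlinarith
      rw [min_eq_left h2] at h1
      linarith
    have := hφmono ⟨le_refl ξ, by rw [hη]; linarith⟩ ⟨by rw [hη]; linarith, le_refl η⟩
      (by rw [hη]; linarith)
    simp only [hφ, hη] at this ⊢
    have harith : D / 2 * (ξ + 2 * t - ξ) ^ 2 = 2 * δ := by
      have : (ξ + 2 * t - ξ) ^ 2 = 4 * t ^ 2 := by ring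
      rw [this, ht2]
      field_simp
      ring
    nlinarith [this]
  -- step 3 : g strictly increasing on [η, b]
  have step3 : g η < g b := by
    have hmono : StrictMonoOn g (Set.Icc η b) := by
      apply strictMonoOn_of_deriv_pos (convex_Icc η b) hgd.continuous.continuousOn
      intro s hs
      rw [interior_Icc] at hs
      have hs1 : ξ + 2 * t < s := by have := hs.1; rw [hη] at this; exact this
      have h1 := step1 s ⟨by linarith, le_of_lt hs.2⟩
      have h2 : 2 * t * D ≤ D * (s - ξ) := by nlinarith
      rw [min_eq_right h2] at h1
      nlinarith
    exact hmono ⟨le_refl η, le_of_lt hηb⟩ ⟨le_of_lt hηb, le_refl b⟩ hηb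
  have h1 := hsmall ξ hξ
  have h2 := hsmall b ⟨le_trans hξ.1 hξ.2, le_refl b⟩
  rw [abs_le] at h1 h2
  linarith [h1.1, h2.2]

/-- Mirror one-sided bound. -/
lemma left_bound (a b : ℝ) (g : ℝ → ℝ) (D δ : ℝ)
    (hg : ContDiff ℝ 2 g)
    (hD : 0 < D) (hδ : 0 < δ) (hδD : δ ≤ D / 4)
    (hmax : ∀ θ ∈ Set.Icc a b, D ≤ max |deriv g θ| (deriv (deriv g) θ))
    (hsmall : ∀ θ ∈ Set.Icc a b, |g θ| ≤ δ)
    {ξ : ℝ} (hξ : ξ ∈ Set.Icc a b) (h0 : deriv g ξ ≤ 0) :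
    ξ - a ≤ 2 * Real.sqrt (δ / D) := by
  set G : ℝ → ℝ := fun s => g (-s) with hG
  have hGc : ContDiff ℝ 2 G := hg.comp contDiff_neg
  have hd1 : deriv G = fun s => -deriv g (-s) := by
    funext s; rw [hG, deriv_comp_neg]
  have hd2 : deriv (deriv G) = fun s => deriv (deriv g) (-s) := by
    rw [hd1]; funext s
    rw [show (fun s => -deriv g (-s)) = (fun s : ℝ => -((fun u => deriv g (-u)) s)) from rfl,
      deriv.fun_neg, deriv_comp_neg, neg_neg]
  have hmax' : ∀ θ ∈ Set.Icc (-b) (-a), D ≤ max |deriv G θ| (deriv (deriv G) θ) := by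
    intro θ hθ
    have hm : -θ ∈ Set.Icc a b := ⟨by linarith [hθ.2], by linarith [hθ.1]⟩
    rw [hd2, hd1]
    simpa [abs_neg] using hmax (-θ) hm
  have hsmall' : ∀ θ ∈ Set.Icc (-b) (-a), |G θ| ≤ δ := by
    intro θ hθ
    exact hsmall (-θ) ⟨by linarith [hθ.2], by linarith [hθ.1]⟩
  have h0' : 0 ≤ deriv G (-ξ) := by
    rw [hd1]; simp only [neg_neg]; linarith
  have := right_bound (-b) (-a) G D δ hGc hD hδ hδD hmax' hsmall'
    (ξ := -ξ) ⟨by linarith [hξ.2], by linarith [hξ.1]⟩ h0'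
  linarith

/-- If `g` is `C²` on `I`, `max{|g'|, g''} ≥ D > 0` on `I`, `0 < δ ≤ D/4` and
`g(I) ⊆ [-δ, δ]`, then `|I| ≤ 4 √(δ/D)`. -/
theorem stmt5 (a b : ℝ) (g : ℝ → ℝ) (D δ : ℝ)
    (hab : a ≤ b) (hg : ContDiff ℝ 2 g)
    (hD : 0 < D) (hδ : 0 < δ) (hδD : δ ≤ D / 4)
    (hmax : ∀ θ ∈ Set.Icc a b, D ≤ max |deriv g θ| (deriv (deriv g) θ))
    (hsmall : ∀ θ ∈ Set.Icc a b, |g θ| ≤ δ) :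
    b - a ≤ 4 * Real.sqrt (δ / D) := by
  have htpos : 0 < Real.sqrt (δ / D) := Real.sqrt_pos.mpr (by positivity)
  have hdg : Differentiable ℝ (deriv g) := by
    have h2 : ContDiff ℝ ((1:WithTop ℕ∞) + 1) g := by exact_mod_cast hg
    exact ((contDiff_succ_iff_deriv.mp h2).2.2).differentiable one_ne_zero
  by_cases hex : ∃ ξ ∈ Set.Icc a b, deriv g ξ = 0
  · obtain ⟨ξ, hξ, hz⟩ := hex
    have h1 := right_bound a b g D δ hg hD hδ hδD hmax hsmall hξ (by rw [hz])
    have h2 := left_bound a b g D δ hg hD hδ hδD hmax hsmall hξ (by rw [hz])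
    linarith
  · push_neg at hex
    have ha : a ∈ Set.Icc a b := ⟨le_refl a, hab⟩
    have hb : b ∈ Set.Icc a b := ⟨hab, le_refl b⟩
    rcases lt_or_gt_of_ne (hex a ha) with hna | hpa
    · have hnb : deriv g b < 0 := by
        rcases lt_or_gt_of_ne (hex b hb) with h | h
        · exact h
        · exfalso
          have hivt := intermediate_value_Icc hab hdg.continuous.continuousOn
          have : (0:ℝ) ∈ Set.Icc (deriv g a) (deriv g b) := ⟨le_of_lt hna, le_of_lt h⟩
          obtain ⟨ξ, hξ, hz⟩ := hivt this
          exact hex ξ hξ hz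
      have := left_bound a b g D δ hg hD hδ hδD hmax hsmall hb (le_of_lt hnb)
      linarith
    · have := right_bound a b g D δ hg hD hδ hδD hmax hsmall ha (le_of_lt hpa)
      linarith
end

section
/- Let ω be Diophantine with constants κ, τ. Let J^1, J^2 ⊂ 𝕋 be disjoint intervals each of length ≤ ε, and suppose there is an integer ν ∈ [1, N], N = ⌊(κ/(2ε))^{1/τ}⌋, with J^1 ∩ (J^2 - νω) ≠ ∅. Set I = J^1 ∪ (J^2 - νω). Then (J^1 ∪ J^2) ∩ (I + mω) = ∅ for all m ∈ [-N+ν, N] with m ∉ {0, ν}; moreover I ∩ J^2 = ∅ and (I + νω) ∩ J^1 = ∅. -/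
/-- Two subsets of the circle, represented by sets of reals, are disjoint mod 1
if no point of one is congruent mod 1 to a point of the other. -/
def DisjointMod1 (A B : Set ℝ) : Prop :=
  ∀ x ∈ A, ∀ y ∈ B, ∀ p : ℤ, x ≠ y + p

/-- Resonant intervals: if `J¹, J²` are disjoint intervals of length `≤ ε` and
`J¹ ∩ (J² - νω) ≠ ∅` for some `ν ∈ [1, N]`, `N = ⌊(κ/(2ε))^(1/τ)⌋`, then for
`I = J¹ ∪ (J² - νω)` one has `(J¹ ∪ J²) ∩ (I + mω) = ∅` for all
`m ∈ [-N+ν, N] \ {0, ν}`, and moreover `I ∩ J² = ∅` and `(I + νω) ∩ J¹ = ∅`. -/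
theorem stmt7 (ω κ τ ε a₁ b₁ a₂ b₂ : ℝ)
    (hκ : 0 < κ) (hτ : 1 ≤ τ) (hε : 0 < ε)
    (hdio : ∀ q : ℤ, q ≠ 0 → ∀ p : ℤ, κ / |(q:ℝ)| ^ τ < |(q:ℝ) * ω - p|)
    (hlen₁ : b₁ - a₁ ≤ ε) (hlen₂ : b₂ - a₂ ≤ ε)
    (hdisj : DisjointMod1 (Set.Icc a₁ b₁) (Set.Icc a₂ b₂))
    (ν : ℤ) (hν1 : 1 ≤ ν) (hνN : ν ≤ ⌊(κ / (2*ε)) ^ (1/τ)⌋)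
    (hmeet : ¬ DisjointMod1 (Set.Icc a₁ b₁)
      ((fun y => y - (ν:ℝ) * ω) '' Set.Icc a₂ b₂)) :
    (∀ m : ℤ, -⌊(κ / (2*ε)) ^ (1/τ)⌋ + ν ≤ m → m ≤ ⌊(κ / (2*ε)) ^ (1/τ)⌋ →
      m ≠ 0 → m ≠ ν →
      DisjointMod1 (Set.Icc a₁ b₁ ∪ Set.Icc a₂ b₂)
        ((fun x => x + (m:ℝ) * ω) ''
          (Set.Icc a₁ b₁ ∪ (fun y => y - (ν:ℝ) * ω) '' Set.Icc a₂ b₂))) ∧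
    DisjointMod1 (Set.Icc a₁ b₁ ∪ (fun y => y - (ν:ℝ) * ω) '' Set.Icc a₂ b₂)
      (Set.Icc a₂ b₂) ∧
    DisjointMod1 ((fun x => x + (ν:ℝ) * ω) ''
        (Set.Icc a₁ b₁ ∪ (fun y => y - (ν:ℝ) * ω) '' Set.Icc a₂ b₂))
      (Set.Icc a₁ b₁) := by
  set N : ℤ := ⌊(κ / (2*ε)) ^ (1/τ)⌋ with hNdef
  have hτ0 : (0:ℝ) < τ := lt_of_lt_of_le one_pos hτ
  have hbase : (0:ℝ) < κ / (2*ε) := div_pos hκ (by linarith)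
  have hNle : (N:ℝ) ≤ (κ/(2*ε))^(1/τ) := Int.floor_le _
  -- key diophantine bound
  have key : ∀ q : ℤ, q ≠ 0 → |q| ≤ N → 2*ε ≤ κ / |(q:ℝ)|^τ := by
    intro q hq hqN
    have h2 : |(q:ℝ)| ≤ (κ/(2*ε))^(1/τ) := by
      rw [← Int.cast_abs]
      exact le_trans (by exact_mod_cast hqN) hNle
    have h1 : (0:ℝ) < |(q:ℝ)| := by
      have : (q:ℝ) ≠ 0 := Int.cast_ne_zero.mpr hq
      exact abs_pos.mpr this
    have h3 : |(q:ℝ)|^τ ≤ κ/(2*ε) := by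
      calc |(q:ℝ)|^τ ≤ ((κ/(2*ε))^(1/τ))^τ :=
            Real.rpow_le_rpow (abs_nonneg _) h2 hτ0.le
        _ = κ/(2*ε) := by
            rw [one_div, Real.rpow_inv_rpow hbase.le (ne_of_gt hτ0)]
    have hpos : (0:ℝ) < |(q:ℝ)|^τ := Real.rpow_pos_of_pos h1 τ
    calc 2*ε = κ / (κ/(2*ε)) := by field_simp
      _ ≤ κ / |(q:ℝ)|^τ := div_le_div_of_nonneg_left hκ.le hpos h3
  -- main nonvanishing lemma
  have main : ∀ q : ℤ, q ≠ 0 → |q| ≤ N → ∀ δ : ℝ, |δ| ≤ 2*ε → ∀ k : ℤ,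
      (q:ℝ)*ω + δ + k ≠ 0 := by
    intro q hq hqN δ hδ k heq
    have h := hdio q hq (-k)
    have h2 : (q:ℝ)*ω - ((-k : ℤ):ℝ) = -δ := by push_cast; linarith
    rw [h2, abs_neg] at h
    have := key q hq hqN
    linarith [abs_le.mp hδ, h, this, le_abs_self δ, neg_abs_le δ,
      (abs_le.mp (le_of_lt (lt_of_le_of_lt (le_trans hδ (key q hq hqN)) h)))]
  -- extract the intersection point
  unfold DisjointMod1 at hmeet
  push_neg at hmeet
  obtain ⟨x₀, hx₀, y', hy', p₀, hx₀eq⟩ := hmeet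
  obtain ⟨y₀, hy₀, rfl⟩ := hy'
  simp only at hx₀eq
  -- x₀ = y₀ - ν*ω + p₀
  -- every point of I = J¹ ∪ (J² - νω) is x₀ + δ + k, |δ| ≤ ε
  have hI : ∀ u ∈ Set.Icc a₁ b₁ ∪ (fun y => y - (ν:ℝ) * ω) '' Set.Icc a₂ b₂,
      ∃ δ : ℝ, ∃ k : ℤ, |δ| ≤ ε ∧ u = x₀ + δ + k := by
    rintro u (hu | ⟨y, hy, rfl⟩)
    · refine ⟨u - x₀, 0, ?_, by push_cast; ring⟩
      rw [abs_le]
      constructor <;>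
        [linarith [hu.1, hu.2, hx₀.1, hx₀.2]; linarith [hu.1, hu.2, hx₀.1, hx₀.2]]
    · refine ⟨y - y₀, -p₀, ?_, ?_⟩
      · rw [abs_le]
        constructor <;>
          [linarith [hy.1, hy.2, hy₀.1, hy₀.2]; linarith [hy.1, hy.2, hy₀.1, hy₀.2]]
      · push_cast; linarith [hx₀eq]
  -- points of J¹ : z = x₀ + δ + 0 with s = 0; points of J² : z = x₀ + ν*ω + δ + (-p₀)
  have hJ1 : ∀ z ∈ Set.Icc a₁ b₁, ∃ δ : ℝ, |δ| ≤ ε ∧ z = x₀ + δ := by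
    intro z hz
    refine ⟨z - x₀, ?_, by ring⟩
    rw [abs_le]
    constructor <;> [linarith [hz.1, hz.2, hx₀.1, hx₀.2]; linarith [hz.1, hz.2, hx₀.1, hx₀.2]]
  have hJ2 : ∀ z ∈ Set.Icc a₂ b₂, ∃ δ : ℝ, |δ| ≤ ε ∧ z = x₀ + (ν:ℝ)*ω + δ + (-p₀ : ℤ) := by
    intro z hz
    refine ⟨z - y₀, ?_, ?_⟩
    · rw [abs_le]
      constructor <;> [linarith [hz.1, hz.2, hy₀.1, hy₀.2]; linarith [hz.1, hz.2, hy₀.1, hy₀.2]]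
    · push_cast; linarith [hx₀eq]
  have hN1 : 1 ≤ N := le_trans hν1 hνN
  refine ⟨?_, ?_, ?_⟩
  · -- part 1
    intro m hm1 hm2 hm0 hmν
    rintro z hz w ⟨u, hu, rfl⟩ p heq
    simp only at heq
    obtain ⟨δ₂, k₂, hδ₂, hu'⟩ := hI u hu
    rcases hz with hz | hz
    · obtain ⟨δ₁, hδ₁, hz'⟩ := hJ1 z hz
      refine main (-m) (by omega) (by rw [abs_neg]; rw [abs_le]; omega)
        (δ₁ - δ₂) ?_ (-k₂ - p) ?_
      · rw [abs_le]
        have := abs_le.mp hδ₁; have := abs_le.mp hδ₂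
        constructor <;> linarith
      · push_cast
        rw [hz', hu'] at heq
        push_cast at heq
        linarith
    · obtain ⟨δ₁, hδ₁, hz'⟩ := hJ2 z hz
      refine main (ν - m) (by omega) (by rw [abs_le]; omega)
        (δ₁ - δ₂) ?_ (-p₀ - k₂ - p) ?_
      · rw [abs_le]
        have := abs_le.mp hδ₁; have := abs_le.mp hδ₂
        constructor <;> linarith
      · push_cast
        rw [hz', hu'] at heq
        push_cast at heq
        linarith
  · -- part 2: I ∩ J² = ∅
    rintro u hu z hz p heq
    obtain ⟨δ₂, k₂, hδ₂, hu'⟩ := hI u hu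
    obtain ⟨δ₁, hδ₁, hz'⟩ := hJ2 z hz
    refine main (-ν) (by omega) (by rw [abs_neg, abs_le]; omega)
      (δ₂ - δ₁) ?_ (k₂ + p₀ - p) ?_
    · rw [abs_le]
      have := abs_le.mp hδ₁; have := abs_le.mp hδ₂
      constructor <;> linarith
    · push_cast
      rw [hz', hu'] at heq
      push_cast at heq
      linarith
  · -- part 3: (I + νω) ∩ J¹ = ∅
    rintro w ⟨u, hu, rfl⟩ z hz p heq
    simp only at heq
    obtain ⟨δ₂, k₂, hδ₂, hu'⟩ := hI u hu
    obtain ⟨δ₁, hδ₁, hz'⟩ := hJ1 z hz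
    refine main ν (by omega) (by rw [abs_le]; omega)
      (δ₂ - δ₁) ?_ (k₂ - p) ?_
    · rw [abs_le]
      have := abs_le.mp hδ₁; have := abs_le.mp hδ₂
      constructor <;> linarith
    · push_cast
      rw [hu'] at heq
      push_cast at heq
      linarith [hz']
end

section
/- Let (r_k) be a sequence in ℝ ∪ {∞} of iterates r_{k+1} = v_k - 1/r_k with |v_k| ≤ C for all k (C ≥ 1, λ ≥ 2C). If |r_j| < λ^{-2} for some index j, then |r_j r_{j+1}| = |r_j v_j - 1| ≥ 1 - Cλ^{-2} > 1/2. Consequently, for any k with |r_k| ≥ λ^{-2}, the product r_0 r_1 ⋯ r_k can be written as ρ_0 ⋯ ρ_l where each ρ_i is either a single factor r_j with |r_j| ≥ λ^{-2}, or a pair r_j r_{j+1} with |r_j| < λ^{-2}, and in all cases |ρ_i| ≥ λ^{-2}. -/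
/-- Pairing of small factors: for iterates `r_{k+1} = v_k - 1/r_k` with
`|v_k| ≤ C`, `C ≥ 1`, `λ ≥ 2C`, if `|r_j| < λ⁻²` then
`|r_j r_{j+1}| = |r_j v_j - 1| ≥ 1 - C λ⁻² > 1/2`; consequently, whenever
`|r_k| ≥ λ⁻²` the product `r_0 ⋯ r_k` can be written as `ρ_0 ⋯ ρ_l` where each
`ρ_i` is either a single factor `r_j` with `|r_j| ≥ λ⁻²` or a pair
`r_j r_{j+1}` with `|r_j| < λ⁻²`, and in all cases `|ρ_i| ≥ λ⁻²`. -/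
theorem stmt8 (lam C : ℝ) (v r : ℕ → ℝ)
    (hlam : 2 ≤ lam) (hC : 1 ≤ C) (hlamC : 2 * C ≤ lam)
    (hv : ∀ k, |v k| ≤ C)
    (hrne : ∀ k, r k ≠ 0)
    (hrec : ∀ k, r (k+1) = v k - 1 / r k) :
    (∀ j, |r j| < lam⁻¹ ^ 2 →
      |r j * r (j+1)| = |r j * v j - 1| ∧
      1 - C * lam⁻¹ ^ 2 ≤ |r j * r (j+1)| ∧
      (1:ℝ)/2 < 1 - C * lam⁻¹ ^ 2) ∧
    (∀ k, lam⁻¹ ^ 2 ≤ |r k| →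
      ∃ (l : ℕ) (ρ : ℕ → ℝ),
        (∏ i ∈ Finset.range (l+1), ρ i) = (∏ j ∈ Finset.range (k+1), r j) ∧
        ∀ i ≤ l, lam⁻¹ ^ 2 ≤ |ρ i| ∧
          ((∃ j ≤ k, ρ i = r j ∧ lam⁻¹ ^ 2 ≤ |r j|) ∨
           (∃ j < k, ρ i = r j * r (j+1) ∧ |r j| < lam⁻¹ ^ 2))) := by
  have hlam0 : (0:ℝ) < lam := by linarith
  have hinv : lam * lam⁻¹ = 1 := mul_inv_cancel₀ (ne_of_gt hlam0)
  have hinv_pos : 0 < lam⁻¹ := inv_pos.mpr hlam0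
  have hinv_le : lam⁻¹ ≤ 1/2 := by nlinarith
  have hs_pos : (0:ℝ) < lam⁻¹ ^ 2 := by positivity
  have hs_le : lam⁻¹ ^ 2 ≤ 1/4 := by nlinarith
  have hCinv : C * lam⁻¹ ≤ 1/2 := by nlinarith
  have hCs : C * lam⁻¹ ^ 2 ≤ 1/4 := by nlinarith
  have half : (1:ℝ)/2 < 1 - C * lam⁻¹ ^ 2 := by linarith
  have key : ∀ j, r j * r (j+1) = r j * v j - 1 := by
    intro j
    rw [hrec j, mul_sub, mul_one_div, div_self (hrne j)]
  have keybound : ∀ j, |r j| < lam⁻¹ ^ 2 → 1 - C * lam⁻¹ ^ 2 ≤ |r j * r (j+1)| := by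
    intro j hj
    rw [key j]
    have h1 : |r j * v j| ≤ lam⁻¹ ^ 2 * C := by
      rw [abs_mul]
      exact mul_le_mul hj.le (hv j) (abs_nonneg _) hs_pos.le
    have h2 : 1 - |r j * v j| ≤ |r j * v j - 1| := by
      have h := abs_sub_abs_le_abs_sub (1:ℝ) (r j * v j)
      rw [abs_one, abs_sub_comm] at h
      linarith
    nlinarith
  have hpairge : ∀ j, |r j| < lam⁻¹ ^ 2 → lam⁻¹ ^ 2 ≤ |r j * r (j+1)| := by
    intro j hj; linarith [keybound j hj]
  have hnosucc : ∀ j, |r j| < lam⁻¹ ^ 2 → lam⁻¹ ^ 2 ≤ |r (j+1)| := by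
    intro j hj
    have hrj : 0 < |r j| := abs_pos.mpr (hrne j)
    have h1 : lam ^ 2 ≤ |1 / r j| := by
      rw [abs_div, abs_one, le_div_iff₀ hrj]
      have h := mul_le_mul_of_nonneg_left hj.le (sq_nonneg lam)
      have heq : lam ^ 2 * lam⁻¹ ^ 2 = 1 := by
        rw [← mul_pow, hinv]; norm_num
      linarith
    have h2 : |1 / r j| - |v j| ≤ |v j - 1 / r j| := by
      have h := abs_sub_abs_le_abs_sub (1 / r j) (v j)
      rw [abs_sub_comm] at h
      linarith
    rw [hrec j]
    have h3 : lam⁻¹ ^ 2 ≤ lam ^ 2 - C := by nlinarith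
    linarith [hv j]
  refine ⟨fun j hj => ⟨by rw [key j], keybound j hj, half⟩, ?_⟩
  intro k
  induction k using Nat.strong_induction_on with
  | _ k IH =>
    intro hk
    cases k with
    | zero =>
      exact ⟨0, fun _ => r 0, by simp, fun i hi =>
        ⟨hk, Or.inl ⟨0, le_rfl, rfl, hk⟩⟩⟩
    | succ m =>
      by_cases hm : |r m| < lam⁻¹ ^ 2
      · cases m with
        | zero =>
          refine ⟨0, fun _ => r 0 * r 1, by simp [Finset.prod_range_succ], ?_⟩
          intro i hi
          exact ⟨hpairge 0 hm, Or.inr ⟨0, Nat.zero_lt_one, rfl, hm⟩⟩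
        | succ n =>
          have hn : lam⁻¹ ^ 2 ≤ |r n| := by
            by_contra h
            push_neg at h
            exact absurd (hnosucc n h) (not_le.mpr hm)
          obtain ⟨l, ρ, hprod, hcond⟩ := IH n (by omega) hn
          refine ⟨l+1, fun i => if i ≤ l then ρ i else r (n+1) * r (n+2), ?_, ?_⟩
          · rw [Finset.prod_range_succ]
            have h1 : (∏ i ∈ Finset.range (l+1),
                if i ≤ l then ρ i else r (n+1) * r (n+2)) = ∏ i ∈ Finset.range (l+1), ρ i := by
              apply Finset.prod_congr rfl
              intro i hi
              rw [if_pos (Nat.lt_succ_iff.mp (Finset.mem_range.mp hi))]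
            rw [h1, hprod, if_neg (by omega), Finset.prod_range_succ r (n+2),
              Finset.prod_range_succ r (n+1)]
            ring
          · intro i hi
            by_cases hil : i ≤ l
            · simp only [if_pos hil]
              obtain ⟨h1, h2⟩ := hcond i hil
              refine ⟨h1, ?_⟩
              rcases h2 with ⟨j, hj, e, b⟩ | ⟨j, hj, e, b⟩
              · exact Or.inl ⟨j, by omega, e, b⟩
              · exact Or.inr ⟨j, by omega, e, b⟩
            · have hie : i = l + 1 := by omega
              subst hie
              simp only [if_neg hil]
              exact ⟨hpairge (n+1) hm, Or.inr ⟨n+1, by omega, rfl, hm⟩⟩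
      · push_neg at hm
        obtain ⟨l, ρ, hprod, hcond⟩ := IH m (by omega) hm
        refine ⟨l+1, fun i => if i ≤ l then ρ i else r (m+1), ?_, ?_⟩
        · rw [Finset.prod_range_succ]
          have h1 : (∏ i ∈ Finset.range (l+1),
              if i ≤ l then ρ i else r (m+1)) = ∏ i ∈ Finset.range (l+1), ρ i := by
            apply Finset.prod_congr rfl
            intro i hi
            rw [if_pos (Nat.lt_succ_iff.mp (Finset.mem_range.mp hi))]
          rw [h1, hprod, if_neg (by omega), Finset.prod_range_succ r (m+1)]
        · intro i hi
          by_cases hil : i ≤ l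
          · simp only [if_pos hil]
            obtain ⟨h1, h2⟩ := hcond i hil
            refine ⟨h1, ?_⟩
            rcases h2 with ⟨j, hj, e, b⟩ | ⟨j, hj, e, b⟩
            · exact Or.inl ⟨j, by omega, e, b⟩
            · exact Or.inr ⟨j, by omega, e, b⟩
          · have hie : i = l + 1 := by omega
            subst hie
            simp only [if_neg hil]
            exact ⟨hk, Or.inl ⟨m+1, le_rfl, rfl, hk⟩⟩
end

section
/- Let r_1 ∈ ℝ be given and define r_{j+1} = v_j - 1/r_j; let s_0 ∈ ℝ with s_0 ≠ 0 and s_1 = r_1 - 1/s_0, s_{j+1} = v_j - 1/s_j. Then for all k ≥ 1 (assuming all denominators are nonzero): r_{k+1} - s_{k+1} = ( r_1^2 ⋯ r_k^2 ( s_0 - 1/r_1 - 1/(r_1^2 r_2) - 1/(r_1^2 r_2^2 r_3) - ⋯ - 1/(r_1^2 ⋯ r_{k-1}^2 r_k) ) )^{-1}. -/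
/-- Shadowing formula: with `r_{j+1} = v_j - 1/r_j` (j ≥ 1), `s₁ = r₁ - 1/s₀`,
`s_{j+1} = v_j - 1/s_j` (j ≥ 1), one has for `k ≥ 1`:
`r_{k+1} - s_{k+1} = (r₁²⋯r_k² (s₀ - 1/r₁ - 1/(r₁²r₂) - ⋯ - 1/(r₁²⋯r_{k-1}²r_k)))⁻¹`. -/
theorem stmt10 (v r s : ℕ → ℝ) (k : ℕ) (hk : 1 ≤ k)
    (hrrec : ∀ j, 1 ≤ j → r (j+1) = v j - 1 / r j)
    (hs1 : s 1 = r 1 - 1 / s 0)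
    (hsrec : ∀ j, 1 ≤ j → s (j+1) = v j - 1 / s j)
    (hs0 : s 0 ≠ 0)
    (hrne : ∀ j, 1 ≤ j → j ≤ k → r j ≠ 0)
    (hsne : ∀ j, 1 ≤ j → j ≤ k → s j ≠ 0)
    (hden : (∏ j ∈ Finset.Icc 1 k, (r j)^2) *
        (s 0 - ∑ i ∈ Finset.Icc 1 k,
          ((∏ j ∈ Finset.Icc 1 (i-1), (r j)^2) * r i)⁻¹) ≠ 0) :
    r (k+1) - s (k+1) =
      ((∏ j ∈ Finset.Icc 1 k, (r j)^2) *
        (s 0 - ∑ i ∈ Finset.Icc 1 k,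
          ((∏ j ∈ Finset.Icc 1 (i-1), (r j)^2) * r i)⁻¹))⁻¹ := by
  set P : ℕ → ℝ := fun j => ∏ i ∈ Finset.Icc 1 j, (r i)^2 with hP
  set D : ℕ → ℝ := fun j => P j * (s 0 - ∑ i ∈ Finset.Icc 1 j, (P (i-1) * r i)⁻¹) with hD
  have hPne : ∀ j, j ≤ k → P j ≠ 0 := by
    intro j hj
    refine Finset.prod_ne_zero_iff.mpr ?_
    intro i hi
    obtain ⟨h1, h2⟩ := Finset.mem_Icc.mp hi
    exact pow_ne_zero 2 (hrne i h1 (le_trans h2 hj))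
  have hD0 : D 0 = s 0 := by simp [hD, hP]
  have hDstep : ∀ j, 1 ≤ j → j ≤ k → D j = D (j-1) * (r j)^2 - r j := by
    intro j hj hjk
    obtain ⟨m, rfl⟩ : ∃ m, j = m + 1 := ⟨j - 1, (Nat.succ_pred_eq_of_pos hj).symm⟩
    simp only [Nat.add_sub_cancel]
    have hPm : P m ≠ 0 := hPne m (le_trans (Nat.le_succ m) hjk)
    have hr : r (m+1) ≠ 0 := hrne _ (Nat.succ_le_succ (Nat.zero_le m)) hjk
    have e1 : P (m+1) = P m * (r (m+1))^2 :=
      Finset.prod_Icc_succ_top (Nat.le_add_left 1 m) _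
    have e2 : ∑ i ∈ Finset.Icc 1 (m+1), (P (i-1) * r i)⁻¹ =
        (∑ i ∈ Finset.Icc 1 m, (P (i-1) * r i)⁻¹) + (P m * r (m+1))⁻¹ := by
      rw [Finset.sum_Icc_succ_top (Nat.le_add_left 1 m)]
      simp
    simp only [hD]
    rw [e1, e2]
    field_simp
    ring
  have main : ∀ j, 1 ≤ j → j ≤ k → D (j-1) ≠ 0 ∧ r j - s j = (D (j-1))⁻¹ := by
    intro j hj
    induction j, hj using Nat.le_induction with
    | base =>
      intro _
      simp only [Nat.sub_self, hD0]
      refine ⟨hs0, ?_⟩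
      rw [hs1, one_div]; ring
    | succ m hm ih =>
      intro hmk
      have hmk' : m ≤ k := le_trans (Nat.le_succ m) hmk
      obtain ⟨hDne, hdiff⟩ := ih hmk'
      have hrm : r m ≠ 0 := hrne m hm hmk'
      have hsm : s m ≠ 0 := hsne m hm hmk'
      have hsval : s m = r m - (D (m-1))⁻¹ := by linarith [hdiff]
      have hDm : D m = D (m-1) * r m * s m := by
        rw [hDstep m hm hmk', hsval]
        field_simp
      have hDmne : D m ≠ 0 := by
        rw [hDm]; exact mul_ne_zero (mul_ne_zero hDne hrm) hsm
      simp only [Nat.add_sub_cancel]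
      refine ⟨hDmne, ?_⟩
      have h1 : r (m+1) = v m - 1 / r m := hrrec m hm
      have h2 : s (m+1) = v m - 1 / s m := hsrec m hm
      have h3 : r (m+1) - s (m+1) = (r m - s m) / (r m * s m) := by
        rw [h1, h2]; field_simp; ring
      rw [h3, hdiff, hDm]
      rw [div_eq_mul_inv, ← mul_inv, ← mul_assoc]
  obtain ⟨hDne, hdiff⟩ := main k hk le_rfl
  have hrk : r k ≠ 0 := hrne k hk le_rfl
  have hsk : s k ≠ 0 := hsne k hk le_rfl
  have hsval : s k = r k - (D (k-1))⁻¹ := by linarith [hdiff]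
  have hDm : D k = D (k-1) * r k * s k := by
    rw [hDstep k hk le_rfl, hsval]
    field_simp
  have h1 : r (k+1) = v k - 1 / r k := hrrec k hk
  have h2 : s (k+1) = v k - 1 / s k := hsrec k hk
  have h3 : r (k+1) - s (k+1) = (r k - s k) / (r k * s k) := by
    rw [h1, h2]; field_simp; ring
  have final : r (k+1) - s (k+1) = (D k)⁻¹ := by
    rw [h3, hdiff, hDm]
    rw [div_eq_mul_inv, ← mul_inv, ← mul_assoc]
  simp only [hD, hP] at final
  exact final
end

section
/- With r_1 = v and r_{k+1}(θ) = v(θ+kω) - 1/r_k(θ): if at some θ we have |r_k(θ)| ≥ λ^{3/4} for all k ∈ [1, l] (l ≥ 1), and ‖v'‖_∞ ≤ C ≤ λ with λ ≥ (4C)^{2}, then |r_k'(θ)| ≤ 2C for all k ∈ [1, l]. -/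
/-- If all the iterates `r_1(θ), …, r_l(θ)` are ≥ `λ^(3/4)` in absolute value
and `‖v'‖_∞ ≤ C ≤ λ` with `λ ≥ (4C)²`, then `|r_k'(θ)| ≤ 2C` for `k ∈ [1,l]`. -/
theorem stmt12 (lam C : ℝ) (v : ℝ → ℝ) (ω : ℝ) (r : ℕ → ℝ → ℝ) (θ : ℝ) (l : ℕ)
    (hl : 1 ≤ l) (hlam2 : 2 ≤ lam) (hC : 0 < C) (hClam : C ≤ lam)
    (hlam : (4*C)^2 ≤ lam)
    (hv : ContDiff ℝ 1 v) (hv' : ∀ t, |deriv v t| ≤ C)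
    (hr1 : ∀ t, r 1 t = v t)
    (hrec : ∀ j, 1 ≤ j → ∀ t, r (j+1) t = v (t + (j:ℝ) * ω) - 1 / r j t)
    (hbig : ∀ j, 1 ≤ j → j ≤ l → lam ^ ((3:ℝ)/4) ≤ |r j θ|) :
    ∀ k, 1 ≤ k → k ≤ l → |deriv (r k) θ| ≤ 2 * C := by
  have hlam0 : (0:ℝ) < lam := by linarith
  -- the squares are at least 2
  have hsq : ∀ j, 1 ≤ j → j ≤ l → (2:ℝ) ≤ (r j θ)^2 := by
    intro j hj1 hjl
    have h1 : lam ^ ((3:ℝ)/2) ≤ (r j θ)^2 := by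
      have := hbig j hj1 hjl
      have h0 : (0:ℝ) ≤ lam ^ ((3:ℝ)/4) := (Real.rpow_pos_of_pos hlam0 _).le
      have := mul_self_le_mul_self h0 this
      calc lam ^ ((3:ℝ)/2) = lam ^ ((3:ℝ)/4) * lam ^ ((3:ℝ)/4) := by
            rw [← Real.rpow_add hlam0]; norm_num
        _ ≤ |r j θ| * |r j θ| := this
        _ = (r j θ)^2 := by rw [← abs_mul, abs_mul_self, sq]
    have h2 : lam ≤ lam ^ ((3:ℝ)/2) := by
      nth_rewrite 1 [← Real.rpow_one lam]
      exact Real.rpow_le_rpow_of_exponent_le (by linarith) (by norm_num)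
    linarith
  have hne : ∀ j, 1 ≤ j → j ≤ l → r j θ ≠ 0 := by
    intro j hj1 hjl
    have := hsq j hj1 hjl
    intro h; rw [h] at this; norm_num at this
  have hvdiff : Differentiable ℝ v := hv.differentiable one_ne_zero
  -- main induction
  have key : ∀ k, 1 ≤ k → k ≤ l → ∃ d, HasDerivAt (r k) d θ ∧ |d| ≤ 2 * C := by
    intro k
    induction k with
    | zero => omega
    | succ n ih =>
      intro _ hkl
      rcases Nat.eq_zero_or_pos n with rfl | hn
      · -- base case k = 1
        have hrv : r 1 = v := funext hr1
        refine ⟨deriv v θ, ?_, ?_⟩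
        · rw [hrv]; exact (hvdiff θ).hasDerivAt
        · have := hv' θ; linarith
      · obtain ⟨d, hd, hdb⟩ := ih hn (by omega)
        have hrq : r (n+1) = fun t => v (t + (n:ℝ) * ω) - 1 / r n t :=
          funext (hrec n hn)
        have hne' := hne n hn (by omega)
        have h1 : HasDerivAt (fun t => v (t + (n:ℝ) * ω)) (deriv v (θ + (n:ℝ) * ω)) θ := by
          have := HasDerivAt.comp θ (hvdiff (θ + (n:ℝ) * ω)).hasDerivAt
            ((hasDerivAt_id θ).add_const ((n:ℝ) * ω))
          simp at this; exact this
        have h2 : HasDerivAt (fun t => 1 / r n t) (-d / (r n θ)^2) θ := by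
          simp only [one_div]; exact hd.inv hne'
        refine ⟨deriv v (θ + (n:ℝ) * ω) - (-d / (r n θ)^2), ?_, ?_⟩
        · rw [hrq]; exact h1.sub h2
        · have hb := hv' (θ + (n:ℝ) * ω)
          have hs := hsq n hn (by omega)
          have hpos : (0:ℝ) < (r n θ)^2 := by linarith
          have : |deriv v (θ + (n:ℝ) * ω) - -d / (r n θ) ^ 2|
              ≤ C + |d| / (r n θ)^2 := by
            calc |deriv v (θ + (n:ℝ) * ω) - -d / (r n θ) ^ 2|
                ≤ |deriv v (θ + (n:ℝ) * ω)| + |(-d / (r n θ) ^ 2)| := abs_sub _ _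
              _ ≤ C + |d| / (r n θ)^2 := by
                  rw [abs_div, abs_neg, abs_of_pos hpos]; linarith
          have hdiv : |d| / (r n θ)^2 ≤ C := by
            rw [div_le_iff₀ hpos]
            nlinarith
          linarith
  intro k hk1 hkl
  obtain ⟨d, hd, hdb⟩ := key k hk1 hkl
  rw [hd.deriv]
  exact hdb
end

section
/- Let (r_k) satisfy r_{k+1} = v_k - 1/r_k with |v_k| ≤ Cλ, and suppose there exists a sequence of indices so that |r_1 ⋯ r_l| → ∞ as l → ∞ along indices where products are taken after the pairing of small factors. Define w_j = 1/r_1 + 1/(r_1² r_2) + ⋯ + 1/(r_1² ⋯ r_{k_j-1}² r_{k_j}) and h_j = 1/(r_1² ⋯ r_{k_j}²), where (k_j) enumerates indices with |r_{k_j}| ≥ λ^{-2}. If (w_j) converges to some w ∈ ℝ and h_j → 0, then for every s_0 ≠ w with s_0 ≠ 0, defining s_1 = r_1 - 1/s_0 and s_{j+1} = v_j - 1/s_j, one has |r_{k_j + 1} - s_{k_j + 1}| = h_j / |s_0 - w_j| → 0 as j → ∞. -/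
/-- Convergence of shadowed orbits: with `r_{k+1} = v_k - 1/r_k`, `|v_k| ≤ Cλ`,
indices `k_j` enumerating times with `|r_{k_j}| ≥ λ⁻²`,
`w_j = Σ_{i=1}^{k_j} 1/(r₁²⋯r_{i-1}² r_i)` and `h_j = 1/(r₁²⋯r_{k_j}²)`:
if `w_j → w`, `h_j → 0` and `s₀ ∉ {0, w}`, then for the shadowing orbit
`s₁ = r₁ - 1/s₀`, `s_{j+1} = v_j - 1/s_j` one has
`|r_{k_j+1} - s_{k_j+1}| = h_j/|s₀ - w_j| → 0`. -/
theorem stmt19 (lam C : ℝ) (v r s : ℕ → ℝ) (kk : ℕ → ℕ) (w : ℝ)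
    (hlam : 2 ≤ lam) (hC : 0 < C)
    (hv : ∀ j, |v j| ≤ C * lam)
    (hrrec : ∀ j, 1 ≤ j → r (j+1) = v j - 1 / r j)
    (hs1 : s 1 = r 1 - 1 / s 0)
    (hsrec : ∀ j, 1 ≤ j → s (j+1) = v j - 1 / s j)
    (hrne : ∀ j, 1 ≤ j → r j ≠ 0) (hsne : ∀ j, s j ≠ 0) (hs0 : s 0 ≠ 0)
    (hkk1 : ∀ j, 1 ≤ kk j) (hmono : StrictMono kk)
    (hkbig : ∀ j, lam⁻¹ ^ 2 ≤ |r (kk j)|)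
    (hwconv : Filter.Tendsto
      (fun j => ∑ i ∈ Finset.Icc 1 (kk j),
        ((∏ m ∈ Finset.Icc 1 (i-1), (r m)^2) * r i)⁻¹)
      Filter.atTop (nhds w))
    (hhconv : Filter.Tendsto
      (fun j => (∏ m ∈ Finset.Icc 1 (kk j), (r m)^2)⁻¹)
      Filter.atTop (nhds 0))
    (hsw : s 0 ≠ w)
    (hswj : ∀ j, s 0 ≠ ∑ i ∈ Finset.Icc 1 (kk j),
      ((∏ m ∈ Finset.Icc 1 (i-1), (r m)^2) * r i)⁻¹) :
    (∀ j, |r (kk j + 1) - s (kk j + 1)| =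
      (∏ m ∈ Finset.Icc 1 (kk j), (r m)^2)⁻¹ /
        |s 0 - ∑ i ∈ Finset.Icc 1 (kk j),
          ((∏ m ∈ Finset.Icc 1 (i-1), (r m)^2) * r i)⁻¹|) ∧
    Filter.Tendsto (fun j => |r (kk j + 1) - s (kk j + 1)|)
      Filter.atTop (nhds 0) := by

  have hdne : ∀ k : ℕ, r (k+1) - s (k+1) ≠ 0 := by
    intro k
    induction k with
    | zero =>
      rw [hs1]
      simpa using inv_ne_zero hs0
    | succ n ih =>
      have h1 := hrne (n+1) (by omega)
      have h2 := hsne (n+1)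
      rw [hrrec (n+1) (by omega), hsrec (n+1) (by omega)]
      have heq : v (n+1) - 1 / r (n+1) - (v (n+1) - 1 / s (n+1))
          = (r (n+1) - s (n+1)) / (r (n+1) * s (n+1)) := by
        field_simp; ring
      rw [heq]
      exact div_ne_zero ih (mul_ne_zero h1 h2)
  have key : ∀ k : ℕ,
      r (k+1) - s (k+1) = ((∏ m ∈ Finset.Icc 1 k, (r m)^2) *
        (s 0 - ∑ i ∈ Finset.Icc 1 k,
          ((∏ m ∈ Finset.Icc 1 (i-1), (r m)^2) * r i)⁻¹))⁻¹ := by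
    intro k
    induction k with
    | zero => simp [hs1]
    | succ n ih =>
      have h1 := hrne (n+1) (by omega)
      have h2 := hsne (n+1)
      set P := ∏ m ∈ Finset.Icc 1 n, (r m)^2 with hP
      set W := ∑ i ∈ Finset.Icc 1 n,
        ((∏ m ∈ Finset.Icc 1 (i-1), (r m)^2) * r i)⁻¹ with hW
      have hDne : P * (s 0 - W) ≠ 0 := by
        intro h
        exact hdne n (by rw [ih, h, inv_zero])
      have hPne : P ≠ 0 := fun h => hDne (by rw [h, zero_mul])
      have hsWne : s 0 - W ≠ 0 := fun h => hDne (by rw [h, mul_zero])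
      have hsn : s (n+1) = r (n+1) - (P * (s 0 - W))⁻¹ := by
        have := ih
        linarith [ih]
      have hprod : ∏ m ∈ Finset.Icc 1 (n+1), (r m)^2 = P * (r (n+1))^2 := by
        rw [Finset.prod_Icc_succ_top (by omega)]
      have hsum : ∑ i ∈ Finset.Icc 1 (n+1),
          ((∏ m ∈ Finset.Icc 1 (i-1), (r m)^2) * r i)⁻¹
          = W + (P * r (n+1))⁻¹ := by
        rw [Finset.sum_Icc_succ_top (by omega)]
        simp [hP, hW]
      rw [hrrec (n+1) (by omega), hsrec (n+1) (by omega), hprod, hsum, hsn]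
      have hsn' : r (n+1) - (P * (s 0 - W))⁻¹ ≠ 0 := by rw [← hsn]; exact h2
      have hsn'' : r (n+1) * (P * (s 0 - W)) - 1 ≠ 0 := by
        intro h
        apply hsn'
        field_simp
        linarith
      have hrd : P * r (n+1) ^ 2 * (s 0 - (W + (P * r (n+1))⁻¹))
          = r (n+1) * (r (n+1) * (P * (s 0 - W)) - 1) := by
        field_simp; ring
      rw [hrd]
      have hsn3 : r (n+1) * (r (n+1) * (P * (s 0 - W)) - 1) ≠ 0 := mul_ne_zero h1 hsn''
      rw [show r (n+1) - (P * (s 0 - W))⁻¹ = (r (n+1) * (P * (s 0 - W)) - 1) / (P * (s 0 - W)) by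
        field_simp, one_div_div, sub_sub_sub_cancel_left, div_sub_div _ _ hsn'' h1, inv_eq_one_div]
      congr 1 <;> ring
  have habs : ∀ j, |r (kk j + 1) - s (kk j + 1)| =
      (∏ m ∈ Finset.Icc 1 (kk j), (r m)^2)⁻¹ /
        |s 0 - ∑ i ∈ Finset.Icc 1 (kk j),
          ((∏ m ∈ Finset.Icc 1 (i-1), (r m)^2) * r i)⁻¹| := by
    intro j
    have hPpos : 0 < ∏ m ∈ Finset.Icc 1 (kk j), (r m)^2 := by
      apply Finset.prod_pos
      intro m hm
      have : r m ≠ 0 := hrne m (Finset.mem_Icc.mp hm).1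
      positivity
    rw [key (kk j), abs_inv, abs_mul, abs_of_pos hPpos, mul_inv, div_eq_mul_inv]
  refine ⟨habs, ?_⟩
  have hne : |s 0 - w| ≠ 0 := abs_ne_zero.mpr (sub_ne_zero.mpr hsw)
  have hden : Filter.Tendsto (fun j => |s 0 - ∑ i ∈ Finset.Icc 1 (kk j),
      ((∏ m ∈ Finset.Icc 1 (i-1), (r m)^2) * r i)⁻¹|)
      Filter.atTop (nhds |s 0 - w|) :=
    ((tendsto_const_nhds.sub hwconv).abs)
  have := hhconv.div hden hne
  rw [zero_div] at this
  exact this.congr (fun j => (habs j).symm)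
end
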